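/- Every subset of the set {eᵢ − eⱼ : 1 ≤ i, j ≤ n} ∪ {0} in ℤⁿ is saturated, where e₁, ..., eₙ is the standard basis of ℤⁿ. -/

import Mathlib

open Finset

private def ZRng : Subring ℚ := (Int.castRingHom ℚ).range

private lemma intCast_mem_ZRng (z : ℤ) : (z : ℚ) ∈ ZRng := ⟨z, rfl⟩

private lemma edge_coord_mem {n : ℕ} {a b : Fin n}
    (i : Fin n) : ((Pi.single a 1 - Pi.single b 1 : Fin n → ℚ)) i ∈ ZRng := by
  simp only [Pi.sub_apply, Pi.single_apply]
  split <;> split <;> simpa using intCast_mem_ZRng _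

-- the coordinates of an "edge" vector
private lemma edge_apply {n : ℕ} (a b i : Fin n) :
    ((Pi.single a 1 - Pi.single b 1 : Fin n → ℚ)) i
      = (if i = a then (1:ℚ) else 0) - (if i = b then (1:ℚ) else 0) := by
  simp [Pi.single_apply]

-- counting: an independent set of edges has a leaf
private lemma exists_leaf {n : ℕ} (T : Finset (Fin n → ℚ)) (hne : T.Nonempty)
    (hedge : ∀ v ∈ T, ∃ a b : Fin n, a ≠ b ∧ v = Pi.single a 1 - Pi.single b 1)
    (hind : LinearIndependent ℚ ((↑) : ↥T → (Fin n → ℚ))) :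
    ∃ i₀ : Fin n, ∃ v₀, T.filter (fun v => v i₀ ≠ 0) = {v₀} := by
  classical
  set V : Finset (Fin n) := Finset.univ.filter (fun i => ∃ v ∈ T, v i ≠ 0) with hV
  have hmemV : ∀ i : Fin n, i ∈ V ↔ ∃ v ∈ T, v i ≠ 0 := by
    intro i; simp [hV]
  -- V is nonempty
  obtain ⟨w, hw⟩ := hne
  obtain ⟨a, b, hab, hwab⟩ := hedge w hw
  have hwa : w a ≠ 0 := by
    rw [hwab, edge_apply]; simp [hab]
  have haV : a ∈ V := (hmemV a).2 ⟨w, hw, hwa⟩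
  have haV' : ∀ v ∈ T, ∀ i, v i ≠ 0 → i ∈ V := fun v hv i hi => (hmemV i).2 ⟨v, hv, hi⟩
  -- linear algebra bound : T.card + 1 ≤ V.card
  have hcardbound : T.card + 1 ≤ V.card := by
    let W : Submodule ℚ (Fin n → ℚ) :=
      { carrier := {y | (∀ i, i ∉ V → y i = 0) ∧ ∑ i ∈ V, y i = 0}
        add_mem' := by
          rintro y z ⟨hy1, hy2⟩ ⟨hz1, hz2⟩
          refine ⟨fun i hi => by simp [hy1 i hi, hz1 i hi], ?_⟩
          simp [Finset.sum_add_distrib, hy2, hz2]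
        zero_mem' := ⟨fun i _ => rfl, by simp⟩
        smul_mem' := by
          rintro c y ⟨hy1, hy2⟩
          refine ⟨fun i hi => by simp [hy1 i hi], ?_⟩
          simp only [Pi.smul_apply, smul_eq_mul, ← Finset.mul_sum, hy2, mul_zero] }
    have hTW : ∀ v ∈ T, v ∈ W := by
      intro v hv
      obtain ⟨a', b', hab', hvab'⟩ := hedge v hv
      have haV2 : a' ∈ V := haV' v hv a' (by rw [hvab', edge_apply]; simp [hab'])
      have hbV2 : b' ∈ V := haV' v hv b' (by rw [hvab', edge_apply]; simp [hab'.symm])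
      constructor
      · intro i hi
        by_contra hne0
        exact hi (haV' v hv i hne0)
      · have hco : ∀ i ∈ V, v i = (if i = a' then (1:ℚ) else 0) - (if i = b' then (1:ℚ) else 0) :=
          fun i _ => by rw [hvab', edge_apply]
        rw [Finset.sum_congr rfl hco, Finset.sum_sub_distrib,
          Finset.sum_ite_eq' V a' (fun _ => (1:ℚ)), Finset.sum_ite_eq' V b' (fun _ => (1:ℚ))]
        simp [haV2, hbV2]
    let φ : (Fin n → ℚ) →ₗ[ℚ] (↥(V.erase a) → ℚ) :=
      LinearMap.funLeft ℚ ℚ (Subtype.val : ↥(V.erase a) → Fin n)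
    have hdisj : Disjoint (Submodule.span ℚ (Set.range ((↑) : ↥T → (Fin n → ℚ))))
        (LinearMap.ker φ) := by
      rw [Submodule.disjoint_def]
      intro y hy hyk
      have hyW : y ∈ W := by
        refine Submodule.span_le.2 ?_ hy
        rintro _ ⟨⟨v, hv⟩, rfl⟩
        exact hTW v hv
      have hker : ∀ i : ↥(V.erase a), y i = 0 :=
        fun i => congrFun (LinearMap.mem_ker.1 hyk) i
      funext i
      show y i = 0
      by_cases hiV : i ∈ V
      · by_cases hia : i = a
        · subst hia
          have hsum : ∑ j ∈ V, y j = y i := by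
            refine Finset.sum_eq_single i (fun j hj hji => ?_) (fun h => absurd hiV h)
            exact hker ⟨j, Finset.mem_erase.2 ⟨hji, hj⟩⟩
          have h0 : ∑ j ∈ V, y j = 0 := hyW.2
          rw [hsum] at h0
          exact h0
        · exact hker ⟨i, Finset.mem_erase.2 ⟨hia, hiV⟩⟩
      · exact hyW.1 i hiV
    have hmap := hind.map (f := φ) hdisj
    have hcard1 : Fintype.card ↥T ≤ Module.finrank ℚ (↥(V.erase a) → ℚ) :=
      hmap.fintype_card_le_finrank
    rw [Module.finrank_fintype_fun_eq_card, Fintype.card_coe, Fintype.card_coe] at hcard1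
    have hec : (V.erase a).card = V.card - 1 := Finset.card_erase_of_mem haV
    have hVpos : 0 < V.card := Finset.card_pos.2 ⟨a, haV⟩
    omega
  -- double counting
  have hdeg : ∑ i ∈ V, (T.filter (fun v => v i ≠ 0)).card = 2 * T.card := by
    have h1 : ∀ i, (T.filter (fun v => v i ≠ 0)).card = ∑ v ∈ T, if v i ≠ 0 then 1 else 0 :=
      fun i => Finset.card_filter _ _
    have h2 : ∀ v ∈ T, (∑ i ∈ V, if v i ≠ 0 then 1 else 0) = 2 := by
      intro v hv
      obtain ⟨a', b', hab', hvab'⟩ := hedge v hv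
      have hfil : V.filter (fun i => v i ≠ 0) = {a', b'} := by
        ext i
        simp only [Finset.mem_filter, Finset.mem_insert, Finset.mem_singleton]
        constructor
        · rintro ⟨-, hi⟩
          by_contra hcon
          push_neg at hcon
          apply hi
          rw [hvab', edge_apply]
          simp [hcon.1, hcon.2]
        · rintro (rfl | rfl)
          · exact ⟨haV' v hv _ (by rw [hvab', edge_apply]; simp [hab']),
              by rw [hvab', edge_apply]; simp [hab']⟩
          · exact ⟨haV' v hv _ (by rw [hvab', edge_apply]; simp [hab'.symm]),
              by rw [hvab', edge_apply]; simp [hab'.symm]⟩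
      have := Finset.card_filter (fun i => v i ≠ 0) V
      rw [hfil] at this
      rw [← this, Finset.card_insert_of_notMem (by simp [hab']), Finset.card_singleton]
    calc ∑ i ∈ V, (T.filter (fun v => v i ≠ 0)).card
        = ∑ i ∈ V, ∑ v ∈ T, if v i ≠ 0 then 1 else 0 := Finset.sum_congr rfl (fun i _ => h1 i)
      _ = ∑ v ∈ T, ∑ i ∈ V, if v i ≠ 0 then 1 else 0 := Finset.sum_comm
      _ = ∑ v ∈ T, 2 := Finset.sum_congr rfl h2
      _ = 2 * T.card := by rw [Finset.sum_const]; ring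
  -- find leaf
  have hdeg1 : ∃ i₀ ∈ V, (T.filter (fun v => v i₀ ≠ 0)).card ≤ 1 := by
    by_contra h
    push_neg at h
    have h2 : ∀ i ∈ V, 2 ≤ (T.filter (fun v => v i ≠ 0)).card := fun i hi => h i hi
    have hsum : ∑ i ∈ V, 2 ≤ ∑ i ∈ V, (T.filter (fun v => v i ≠ 0)).card :=
      Finset.sum_le_sum h2
    rw [Finset.sum_const, smul_eq_mul] at hsum
    rw [hdeg] at hsum
    clear h h2 hdeg
    omega
  obtain ⟨i₀, hi₀V, hle⟩ := hdeg1
  obtain ⟨v', hv'T, hv'⟩ := (hmemV i₀).1 hi₀V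
  have hge : 1 ≤ (T.filter (fun v => v i₀ ≠ 0)).card :=
    Finset.card_pos.2 ⟨v', Finset.mem_filter.2 ⟨hv'T, hv'⟩⟩
  have : (T.filter (fun v => v i₀ ≠ 0)).card = 1 := le_antisymm hle hge
  obtain ⟨v₀, hv₀⟩ := Finset.card_eq_one.1 this
  exact ⟨i₀, v₀, hv₀⟩

private lemma indep_integral {n : ℕ} : ∀ (N : ℕ) (T : Finset (Fin n → ℚ)) (q : (Fin n → ℚ) → ℚ),
    T.card ≤ N →
    (∀ v ∈ T, ∃ a b : Fin n, a ≠ b ∧ v = Pi.single a 1 - Pi.single b 1) →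
    LinearIndependent ℚ ((↑) : ↥T → (Fin n → ℚ)) →
    (∀ i, (∑ v ∈ T, q v • v) i ∈ ZRng) →
    ∀ v ∈ T, q v ∈ ZRng := by
  intro N
  induction N with
  | zero =>
    intro T q hT _ _ _ v hv
    rw [Nat.le_zero, Finset.card_eq_zero] at hT
    subst hT; simp at hv
  | succ N ih =>
    intro T q hcard hedge hind hint v hv
    classical
    obtain ⟨i₀, v₀, hleaf⟩ := exists_leaf T ⟨v, hv⟩ hedge hind
    have hv₀T : v₀ ∈ T := by
      have h1 : v₀ ∈ T.filter (fun u => u i₀ ≠ 0) := by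
        rw [hleaf]; exact Finset.mem_singleton_self v₀
      exact (Finset.mem_filter.1 h1).1
    have hv₀i₀ : v₀ i₀ ≠ 0 := by
      have h1 : v₀ ∈ T.filter (fun u => u i₀ ≠ 0) := by
        rw [hleaf]; exact Finset.mem_singleton_self v₀
      exact (Finset.mem_filter.1 h1).2
    have hxi₀ : (∑ u ∈ T, q u • u) i₀ = q v₀ * v₀ i₀ := by
      rw [Finset.sum_apply]
      rw [← Finset.sum_filter_of_ne (p := fun u => u i₀ ≠ 0)
        (f := fun u => (q u • u) i₀) ?_]
      · rw [hleaf, Finset.sum_singleton]; simp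
      · intro u _ hne
        simp only [Pi.smul_apply, smul_eq_mul] at hne ⊢
        intro h0; apply hne; rw [h0, mul_zero]
    obtain ⟨a, b, hab, hv₀ab⟩ := hedge v₀ hv₀T
    have hpm : v₀ i₀ = 1 ∨ v₀ i₀ = -1 := by
      rcases eq_or_ne i₀ a with h|h <;> rcases eq_or_ne i₀ b with h'|h'
      · exact absurd (h.symm.trans h') hab
      · left; rw [hv₀ab, edge_apply]; simp [h, h', hab]
      · right; rw [hv₀ab, edge_apply]; simp [h, h', Ne.symm hab]
      · exfalso; apply hv₀i₀; rw [hv₀ab, edge_apply]; simp [h, h']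
    have hqv₀ : q v₀ ∈ ZRng := by
      have hx := hint i₀
      rw [hxi₀] at hx
      rcases hpm with h|h
      · rw [h, mul_one] at hx; exact hx
      · rw [h] at hx
        have := ZRng.neg_mem hx
        simpa using this
    by_cases hvv₀ : v = v₀
    · rw [hvv₀]; exact hqv₀
    · have hsub : T.erase v₀ ⊆ T := Finset.erase_subset _ _
      have hcard' : (T.erase v₀).card ≤ N := by
        rw [Finset.card_erase_of_mem hv₀T]
        have := Finset.card_pos.2 ⟨v₀, hv₀T⟩
        omega
      have hedge' : ∀ u ∈ T.erase v₀, ∃ a b : Fin n, a ≠ b ∧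
          u = Pi.single a 1 - Pi.single b 1 := fun u hu => hedge u (hsub hu)
      have hind' : LinearIndependent ℚ ((↑) : ↥(T.erase v₀) → (Fin n → ℚ)) := by
        have hinj : Function.Injective
            (fun x : ↥(T.erase v₀) => (⟨x.1, hsub x.2⟩ : ↥T)) := by
          intro x y hxy
          have hxy' := congrArg (fun z : ↥T => z.1) hxy
          exact Subtype.ext hxy'
        exact hind.comp _ hinj
      have hint' : ∀ i, (∑ u ∈ T.erase v₀, q u • u) i ∈ ZRng := by
        intro i
        have hsplit : ∑ u ∈ T, q u • u = q v₀ • v₀ + ∑ u ∈ T.erase v₀, q u • u :=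
          (Finset.add_sum_erase T _ hv₀T).symm
        have heq : (∑ u ∈ T.erase v₀, q u • u) i = (∑ u ∈ T, q u • u) i - q v₀ * v₀ i := by
          rw [hsplit]; simp
        rw [heq]
        exact ZRng.sub_mem (hint i) (ZRng.mul_mem hqv₀ (by rw [hv₀ab]; exact edge_coord_mem i))
      exact ih (T.erase v₀) q hcard' hedge' hind' hint' v (Finset.mem_erase.2 ⟨hvv₀, hv⟩)

private lemma cone_int {n : ℕ} : ∀ (N : ℕ) (T : Finset (Fin n → ℚ)) (q : (Fin n → ℚ) → ℚ),
    T.card ≤ N →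
    (∀ v ∈ T, 0 < q v) →
    (∀ v ∈ T, ∃ a b : Fin n, a ≠ b ∧ v = Pi.single a 1 - Pi.single b 1) →
    (∀ i, (∑ v ∈ T, q v • v) i ∈ ZRng) →
    ∃ m : (Fin n → ℚ) → ℕ, ∑ v ∈ T, q v • v = ∑ v ∈ T, (m v : ℚ) • v := by
  intro N
  induction N with
  | zero =>
    intro T q hT _ _ _
    rw [Nat.le_zero, Finset.card_eq_zero] at hT
    subst hT
    exact ⟨fun _ => 0, by simp⟩
  | succ N ih =>
    intro T q hcard hpos hedge hint
    classical
    by_cases hind : LinearIndependent ℚ ((↑) : ↥T → (Fin n → ℚ))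
    · -- independent case : coefficients are integers
      have hq := indep_integral (N+1) T q hcard hedge hind hint
      refine ⟨fun v => (q v).num.toNat, Finset.sum_congr rfl (fun v hv => ?_)⟩
      obtain ⟨z, hz'⟩ := hq v hv
      have hz : (z : ℚ) = q v := hz'
      have hz0 : 0 ≤ z := by
        have h1 := (hpos v hv).le
        rw [← hz] at h1
        exact_mod_cast h1
      have hsc : (((q v).num.toNat : ℕ) : ℚ) = q v := by
        rw [← hz, Rat.num_intCast, ← Int.cast_natCast, Int.toNat_of_nonneg hz0]
      rw [hsc]
    · -- dependent case : shrink the support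
      rw [Fintype.not_linearIndependent_iff] at hind
      obtain ⟨g, hgsum, i₁, hgi₁⟩ := hind
      set ε : ℚ := if 0 < g i₁ then 1 else -1 with hε
      set l : (Fin n → ℚ) → ℚ := fun v => if h : v ∈ T then ε * g ⟨v, h⟩ else 0 with hldef
      have hlsum : ∑ v ∈ T, l v • v = 0 := by
        have h1 : ∑ v ∈ T, l v • v = ∑ i : ↥T, l i • (i : Fin n → ℚ) :=
          (Finset.sum_coe_sort T (fun v => l v • v)).symm
        have h2 : ∀ i : ↥T, l i • (i : Fin n → ℚ) = ε • (g i • (i : Fin n → ℚ)) := by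
          intro i
          rw [hldef]
          simp only [dif_pos i.2, Subtype.coe_eta, mul_smul]
        rw [h1, Finset.sum_congr rfl (fun i _ => h2 i), ← Finset.smul_sum, hgsum, smul_zero]
      have hlpos : 0 < l i₁ := by
        rw [hldef]
        simp only [dif_pos i₁.2, Subtype.coe_eta]
        rcases lt_or_gt_of_ne hgi₁ with hneg | hposg
        · rw [hε, if_neg (not_lt.2 hneg.le)]
          linarith
        · rw [hε, if_pos hposg]
          linarith
      set A := T.filter (fun v => 0 < l v) with hA
      have hAne : A.Nonempty := ⟨i₁, Finset.mem_filter.2 ⟨i₁.2, hlpos⟩⟩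
      obtain ⟨v₁, hv₁A, hvmin⟩ := Finset.exists_min_image A (fun v => q v / l v) hAne
      have hlv₁ : 0 < l v₁ := (Finset.mem_filter.1 hv₁A).2
      have hv₁T : v₁ ∈ T := (Finset.mem_filter.1 hv₁A).1
      set θ := q v₁ / l v₁ with hθ
      have hθpos : 0 < θ := div_pos (hpos _ hv₁T) hlv₁
      set q' : (Fin n → ℚ) → ℚ := fun v => q v - θ * l v with hq'
      have hq'nonneg : ∀ v ∈ T, 0 ≤ q' v := by
        intro u hu
        rw [hq']
        by_cases hlu : 0 < l u
        · have hmin := hvmin u (Finset.mem_filter.2 ⟨hu, hlu⟩)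
          have h3 : θ * l u ≤ q u := (le_div_iff₀ hlu).1 hmin
          simp only
          linarith
        · push_neg at hlu
          have h4 : θ * l u ≤ 0 := mul_nonpos_of_nonneg_of_nonpos hθpos.le hlu
          have h5 := (hpos u hu).le
          simp only
          linarith
      have hq'v₁ : q' v₁ = 0 := by
        rw [hq']
        simp only [hθ]
        field_simp
        ring
      have hsums : ∑ v ∈ T, q' v • v = ∑ v ∈ T, q v • v := by
        simp only [hq', sub_smul, Finset.sum_sub_distrib]
        have h6 : ∑ v ∈ T, (θ * l v) • v = θ • ∑ v ∈ T, l v • v := by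
          rw [Finset.smul_sum]
          exact Finset.sum_congr rfl fun v _ => (mul_smul θ (l v) v)
        rw [h6, hlsum, smul_zero, sub_zero]
      set T' := T.filter (fun v => q' v ≠ 0) with hT'
      have hT'subT : T' ⊆ T := Finset.filter_subset _ _
      have hT'sub : T' ⊆ T.erase v₁ := by
        intro u hu
        rw [Finset.mem_erase]
        obtain ⟨huT, hq'u⟩ := Finset.mem_filter.1 hu
        exact ⟨fun h => hq'u (h ▸ hq'v₁), huT⟩
      have hT'card : T'.card ≤ N := by
        have h7 := Finset.card_le_card hT'sub
        rw [Finset.card_erase_of_mem hv₁T] at h7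
        have h8 := Finset.card_pos.2 ⟨v₁, hv₁T⟩
        omega
      have hsum2 : ∑ v ∈ T', q' v • v = ∑ v ∈ T, q' v • v :=
        Finset.sum_filter_of_ne (fun v _ hne h0 => hne (by rw [h0, zero_smul]))
      have hpos' : ∀ v ∈ T', 0 < q' v := fun v hv =>
        lt_of_le_of_ne (hq'nonneg v (hT'subT hv)) (Ne.symm (Finset.mem_filter.1 hv).2)
      have hedge' : ∀ v ∈ T', ∃ a b : Fin n, a ≠ b ∧ v = Pi.single a 1 - Pi.single b 1 :=
        fun v hv => hedge v (hT'subT hv)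
      have hint' : ∀ i, (∑ v ∈ T', q' v • v) i ∈ ZRng := by
        intro i
        rw [hsum2, hsums]
        exact hint i
      obtain ⟨m, hm⟩ := ih T' q' hT'card hpos' hedge' hint'
      refine ⟨fun v => if v ∈ T' then m v else 0, ?_⟩
      have hzero : ∀ v ∈ T, v ∉ T' →
          (((if v ∈ T' then m v else 0 : ℕ) : ℚ)) • v = 0 := by
        intro v _ hv
        rw [if_neg hv]
        simp
      calc ∑ v ∈ T, q v • v
          = ∑ v ∈ T', q' v • v := by rw [hsum2, hsums]
        _ = ∑ v ∈ T', ((m v : ℚ)) • v := hm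
        _ = ∑ v ∈ T', (((if v ∈ T' then m v else 0 : ℕ) : ℚ)) • v :=
            Finset.sum_congr rfl fun v hv => by rw [if_pos hv]
        _ = ∑ v ∈ T, (((if v ∈ T' then m v else 0 : ℕ) : ℚ)) • v :=
            Finset.sum_subset hT'subT hzero


/-- A finite set of vectors in `ℚⁿ` is *saturated* if every vector that is both an
integer combination and a nonnegative-rational combination of its elements is a
nonnegative-integer combination of its elements. -/
def IsSaturatedSet {n : ℕ} (M : Finset (Fin n → ℚ)) : Prop :=
  ∀ x : Fin n → ℚ,
    (∃ c : (Fin n → ℚ) → ℤ, x = ∑ v ∈ M, (c v : ℚ) • v) →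
    (∃ q : (Fin n → ℚ) → ℚ, (∀ v ∈ M, 0 ≤ q v) ∧ x = ∑ v ∈ M, q v • v) →
    ∃ m : (Fin n → ℚ) → ℕ, x = ∑ v ∈ M, (m v : ℚ) • v

/-- Every subset of `{eᵢ − eⱼ : 1 ≤ i, j ≤ n} ∪ {0}` is saturated, where `e₁, ..., eₙ` is
the standard basis of `ℤⁿ` (the weight system of the adjoint representation of `SL(n)`). -/
theorem adjoint_weights_all_subsets_saturated (n : ℕ) (S : Finset (Fin n → ℚ)) 
    (hS : ∀ v ∈ S, v = 0 ∨ ∃ i j : Fin n,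
      v = (Pi.single i 1 : Fin n → ℚ) - (Pi.single j 1 : Fin n → ℚ)) :
    IsSaturatedSet S := by
  rintro x ⟨c, hc⟩ ⟨q, hq0, hqx⟩
  classical
  have hxi : ∀ i, x i ∈ ZRng := by
    intro i
    rw [hc, Finset.sum_apply]
    refine Subring.sum_mem _ (fun v hv => ?_)
    have hvi : v i ∈ ZRng := by
      rcases hS v hv with h0 | ⟨a, b, hab⟩
      · rw [h0]; exact ZRng.zero_mem
      · rw [hab]; exact edge_coord_mem i
    simp only [Pi.smul_apply, smul_eq_mul]
    exact ZRng.mul_mem (intCast_mem_ZRng (c v)) hvi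
  set T := S.filter (fun v => v ≠ 0 ∧ q v ≠ 0) with hT
  have hTsub : T ⊆ S := Finset.filter_subset _ _
  have hsumT : ∑ v ∈ T, q v • v = x := by
    rw [hqx]
    refine Finset.sum_filter_of_ne (fun v _ hne => ?_)
    rw [smul_ne_zero_iff] at hne
    exact ⟨hne.2, hne.1⟩
  have hposT : ∀ v ∈ T, 0 < q v := by
    intro v hv
    exact lt_of_le_of_ne (hq0 v (hTsub hv)) (Ne.symm (Finset.mem_filter.1 hv).2.2)
  have hedgeT : ∀ v ∈ T, ∃ a b : Fin n, a ≠ b ∧ v = Pi.single a 1 - Pi.single b 1 := by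
    intro v hv
    have hvne : v ≠ 0 := (Finset.mem_filter.1 hv).2.1
    rcases hS v (hTsub hv) with h0 | ⟨a, b, hab⟩
    · exact absurd h0 hvne
    · refine ⟨a, b, ?_, hab⟩
      rintro rfl
      exact hvne (by rw [hab, sub_self])
  have hintT : ∀ i, (∑ v ∈ T, q v • v) i ∈ ZRng := by
    intro i
    rw [hsumT]
    exact hxi i
  obtain ⟨m, hm⟩ := cone_int T.card T q le_rfl hposT hedgeT hintT
  refine ⟨fun v => if v ∈ T then m v else 0, ?_⟩
  have hzero : ∀ v ∈ S, v ∉ T →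
      (((if v ∈ T then m v else 0 : ℕ) : ℚ)) • v = 0 := by
    intro v _ hv
    rw [if_neg hv]
    simp
  calc x = ∑ v ∈ T, q v • v := hsumT.symm
    _ = ∑ v ∈ T, ((m v : ℚ)) • v := hm
    _ = ∑ v ∈ T, (((if v ∈ T then m v else 0 : ℕ) : ℚ)) • v :=
        Finset.sum_congr rfl fun v hv => by rw [if_pos hv]
    _ = ∑ v ∈ S, (((if v ∈ T then m v else 0 : ℕ) : ℚ)) • v :=
        Finset.sum_subset hTsub hzero
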